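/- For all n ≥ 4, the number of (n−2)-revstack sortable permutations of {1,…,n} is |T_n^{n-2}| = n! − ⌊(n−1)/2⌋! · ⌈(n−1)/2⌉!. -/

import Mathlib

private theorem length_takeWhile_ne_lt {w : List ℕ} {m : ℕ} (hm : m ∈ w) :
    (w.takeWhile (· ≠ m)).length < w.length := by
  induction w with
  | nil => cases hm
  | cons a as ih =>
    by_cases ha : a = m
    · subst ha
      simp [List.takeWhile_cons]
    · rw [List.takeWhile_cons_of_pos (by simpa using ha)]
      have hm' : m ∈ as := by
        rcases List.mem_cons.mp hm with h | h
        · exact absurd h.symm ha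
        · exact h
      simpa using Nat.succ_lt_succ (ih hm')

private theorem length_tail_dropWhile_lt {w : List ℕ} (hw : w ≠ []) (p : ℕ → Bool) :
    ((w.dropWhile p).tail).length < w.length := by
  cases hd : w.dropWhile p with
  | nil => simpa using List.length_pos_iff.mpr hw
  | cons x xs =>
    have h1 : (x :: xs).length ≤ w.length := by
      rw [← hd]; exact (List.dropWhile_sublist p).length_le
    simp only [List.tail_cons]
    exact lt_of_lt_of_le (by simp) h1

/-- The classical stack sort operator on words: `S(ε) = ε` and `S(L m R) = S(L) S(R) m`,
where `m` is the largest entry of the word `L m R`. -/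
def stackSort : List ℕ → List ℕ
  | [] => []
  | a :: as =>
    let m := ((a :: as).max?).getD 0
    stackSort ((a :: as).takeWhile (· ≠ m)) ++
      stackSort (((a :: as).dropWhile (· ≠ m)).tail) ++ [m]
termination_by w => w.length
decreasing_by
  · refine length_takeWhile_ne_lt ?_
    have : (a :: as).max? = some (((a :: as).max?).getD 0) := by
      cases h : (a :: as).max? with
      | none => simp [List.max?_eq_none_iff] at h
      | some b => simp
    exact List.max?_mem this
  · exact length_tail_dropWhile_lt (by simp) _

/-- The revstack sort operator `T = S ∘ rev`. -/
def revstackSort (w : List ℕ) : List ℕ := stackSort w.reverse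

/-- The word of the identity permutation of `{1,…,n}`, namely `1 2 ⋯ n`. -/
def idPerm (n : ℕ) : List ℕ := List.range' 1 n

/-- `w` is (the word of) a permutation of `{1,…,n}`. -/
def IsPermWord (n : ℕ) (w : List ℕ) : Prop := w.Perm (idPerm n)

/-- `x` precedes `y` in the word `w`, i.e. the position of `x` is smaller than that of `y`. -/
def Precedes (w : List ℕ) (x y : ℕ) : Prop := w.idxOf x < w.idxOf y

/-- `w` contains an occurrence of the pattern `132`: values `a < b < c` occurring in
the order `a, c, b`. -/
def Contains132 (w : List ℕ) : Prop :=
  ∃ a b c, a ∈ w ∧ b ∈ w ∧ c ∈ w ∧ a < b ∧ b < c ∧ Precedes w a c ∧ Precedes w c b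

/-- `w` contains an occurrence of the pattern `2431`: values `a < b < c < d` occurring in
the order `b, d, c, a`. -/
def Contains2431 (w : List ℕ) : Prop :=
  ∃ a b c d, a ∈ w ∧ b ∈ w ∧ c ∈ w ∧ d ∈ w ∧ a < b ∧ b < c ∧ c < d ∧
    Precedes w b d ∧ Precedes w d c ∧ Precedes w c a

/-- `w` contains an occurrence of the barred pattern `241 5̄ 3`: values `a < b < c < d`
occurring in the order `b, d, a, c` with no value `e > d` lying between `a` and `c` in `w`. -/
def ContainsBarred24153 (w : List ℕ) : Prop :=
  ∃ a b c d, a ∈ w ∧ b ∈ w ∧ c ∈ w ∧ d ∈ w ∧ a < b ∧ b < c ∧ c < d ∧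
    Precedes w b d ∧ Precedes w d a ∧ Precedes w a c ∧
    ¬ ∃ e, e ∈ w ∧ d < e ∧ Precedes w a e ∧ Precedes w e c

/-- The number of descents of a word. -/
def des (w : List ℕ) : ℕ := ((w.zip w.tail).filter (fun p => p.2 < p.1)).length

/-- The finset of all words of permutations of `{1,…,n}`. -/
def permsOf (n : ℕ) : Finset (List ℕ) := (idPerm n).permutations.toFinset

/-- The finset of `t`-revstack sortable permutations of `{1,…,n}`. -/
def revstackSortable (n t : ℕ) : Finset (List ℕ) :=
  (permsOf n).filter (fun w => revstackSort^[t] w = idPerm n)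

/-- The finset of `t`-stack sortable permutations of `{1,…,n}`. -/
def stackSortable (n t : ℕ) : Finset (List ℕ) :=
  (permsOf n).filter (fun w => stackSort^[t] w = idPerm n)

/-- The descent polynomial `W(A;x) = ∑_{π ∈ A} x^{1+des(π)}` of a set of permutations. -/
noncomputable def descPoly (A : Finset (List ℕ)) : Polynomial ℚ :=
  ∑ w ∈ A, Polynomial.X ^ (1 + des w)

/-- The `m`-th Eulerian polynomial `A_m(x) = ∑_{π ∈ S_m} x^{1+des(π)}`, with `A_0(x) = 1`. -/
noncomputable def eulerianPoly (m : ℕ) : Polynomial ℚ :=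
  if m = 0 then 1 else descPoly (permsOf m)

/-- `v_t(n,i)`: the number of `t`-revstack sortable permutations of `{1,…,n}`
with exactly `i` descents. -/
def vNum (t n i : ℕ) : ℕ := ((revstackSortable n t).filter (fun w => des w = i)).card

/-- `w_t(n,i)`: the number of `t`-stack sortable permutations of `{1,…,n}`
with exactly `i` descents. -/
def wNum (t n i : ℕ) : ℕ := ((stackSortable n t).filter (fun w => des w = i)).card

section Aux
open List

private lemma max?_eq_some_of {w : List ℕ} {m : ℕ} (hm : m ∈ w) (hb : ∀ x ∈ w, x ≤ m) :
    w.max? = some m := by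
  rw [List.max?_eq_some_iff]
  exact ⟨hm, hb⟩

private lemma takeWhile_ne_append {m : ℕ} {L R : List ℕ} (hL : m ∉ L) :
    (L ++ m :: R).takeWhile (· ≠ m) = L := by
  induction L with
  | nil => simp [List.takeWhile_cons]
  | cons a L ih =>
    have ha : a ≠ m := fun h => hL (h ▸ List.mem_cons_self (a := a) (l := L))
    rw [List.cons_append, List.takeWhile_cons_of_pos (by simpa using ha),
      ih (fun h => hL (List.mem_cons_of_mem a h))]

private lemma dropWhile_ne_append {m : ℕ} {L R : List ℕ} (hL : m ∉ L) :
    (L ++ m :: R).dropWhile (· ≠ m) = m :: R := by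
  induction L with
  | nil => simp [List.dropWhile_cons]
  | cons a L ih =>
    have ha : a ≠ m := fun h => hL (h ▸ List.mem_cons_self (a := a) (l := L))
    rw [List.cons_append, List.dropWhile_cons_of_pos (by simpa using ha)]
    exact ih (fun h => hL (List.mem_cons_of_mem a h))

private lemma stackSort_ne_nil_eq (w : List ℕ) (hw : w ≠ []) :
    stackSort w = stackSort (w.takeWhile (· ≠ (w.max?.getD 0))) ++
      stackSort ((w.dropWhile (· ≠ w.max?.getD 0)).tail) ++ [w.max?.getD 0] := by
  cases w with
  | nil => exact absurd rfl hw
  | cons a as => rw [stackSort]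

private lemma stackSort_decomp {m : ℕ} {L R : List ℕ} (hL : m ∉ L)
    (hb : ∀ x ∈ L ++ m :: R, x ≤ m) :
    stackSort (L ++ m :: R) = stackSort L ++ stackSort R ++ [m] := by
  have hmem : m ∈ L ++ m :: R := by simp
  have hmax : (L ++ m :: R).max? = some m := max?_eq_some_of hmem hb
  rw [stackSort_ne_nil_eq _ (by simp), hmax]
  simp only [Option.getD_some]
  rw [takeWhile_ne_append hL, dropWhile_ne_append hL, List.tail_cons]
end Aux
section Aux2
open List

private lemma stackSort_perm : ∀ (w : List ℕ), (stackSort w).Perm w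
  | [] => by rw [stackSort]
  | a :: as => by
    rw [stackSort]
    set w := a :: as with hwdef
    set m := (w.max?).getD 0 with hmdef
    have hmmem : m ∈ w := by
      have : w.max? = some m := by
        cases h : w.max? with
        | none => simp [List.max?_eq_none_iff] at h
        | some b => simp [hmdef, h]
      exact List.max?_mem this
    have hd : w.dropWhile (· ≠ m) ≠ [] := by
      intro h
      have := List.takeWhile_append_dropWhile (p := (· ≠ m)) (l := w)
      rw [h, List.append_nil] at this
      rw [← this] at hmmem
      have := List.mem_takeWhile_imp hmmem
      simp at this
    have hdc : w.dropWhile (· ≠ m) = m :: (w.dropWhile (· ≠ m)).tail := by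
      have h2 := List.cons_head_tail hd
      have h1 : (w.dropWhile (· ≠ m)).head hd = m :=
        not_not.mp (of_decide_eq_false (List.head_dropWhile_not (· ≠ m) (l := w) hd))
      conv_lhs => rw [← h2]
      rw [h1]
    have p1 := stackSort_perm (w.takeWhile (· ≠ m))
    have p2 := stackSort_perm ((w.dropWhile (· ≠ m)).tail)
    calc stackSort (w.takeWhile (· ≠ m)) ++ stackSort ((w.dropWhile (· ≠ m)).tail) ++ [m]
        ~ w.takeWhile (· ≠ m) ++ (w.dropWhile (· ≠ m)).tail ++ [m] :=
          ((p1.append p2).append (List.Perm.refl [m]))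
      _ ~ w.takeWhile (· ≠ m) ++ (m :: (w.dropWhile (· ≠ m)).tail) := by
          rw [List.append_assoc]
          refine (List.Perm.refl _).append ?_
          simp only [List.append_nil] at *
          simpa using (List.perm_middle (a := m) (l₁ := (w.dropWhile (· ≠ m)).tail)
            (l₂ := ([] : List ℕ)))
      _ = w := by rw [← hdc]; exact List.takeWhile_append_dropWhile
termination_by w => w.length
decreasing_by
  · refine length_takeWhile_ne_lt ?_
    have : (a :: as).max? = some (((a :: as).max?).getD 0) := by
      cases h : (a :: as).max? with
      | none => simp [List.max?_eq_none_iff] at h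
      | some b => simp
    exact List.max?_mem this
  · exact length_tail_dropWhile_lt (by simp) _

end Aux2
section Aux3
open List

private lemma revstackSort_perm (w : List ℕ) : (revstackSort w).Perm w :=
  (stackSort_perm w.reverse).trans (List.reverse_perm w)

private lemma revstackSort_nil : revstackSort [] = [] := by
  rw [revstackSort]; simp; rw [stackSort]

private lemma revstackSort_decomp {m : ℕ} {L R : List ℕ} (hL : m ∉ L) (hR : m ∉ R)
    (hb : ∀ x ∈ L ++ m :: R, x ≤ m) :
    revstackSort (L ++ m :: R) = revstackSort R ++ revstackSort L ++ [m] := by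
  rw [revstackSort, revstackSort, revstackSort]
  have hrev : (L ++ m :: R).reverse = R.reverse ++ m :: L.reverse := by
    simp
  rw [hrev]
  refine stackSort_decomp (by simpa using hR) ?_
  intro x hx
  apply hb
  have hx2 : x ∈ (L ++ m :: R).reverse := by rw [hrev]; exact hx
  exact List.mem_reverse.mp hx2

private lemma mem_idPerm {x n : ℕ} : x ∈ idPerm n ↔ 1 ≤ x ∧ x ≤ n := by
  rw [idPerm, List.mem_range'_1]
  omega

private lemma idPerm_succ (n : ℕ) : idPerm (n + 1) = idPerm n ++ [n + 1] := by
  rw [idPerm, idPerm, List.range'_concat]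
  simp [Nat.add_comm]

private lemma nodup_idPerm (n : ℕ) : (idPerm n).Nodup := List.nodup_range' (s := 1) (n := n)

private lemma revstackSort_concat {k : ℕ} {u : List ℕ} (hu : u.Perm (idPerm k)) :
    revstackSort (u ++ [k + 1]) = revstackSort u ++ [k + 1] := by
  have hb : ∀ x ∈ u ++ (k+1) :: ([] : List ℕ), x ≤ k + 1 := by
    intro x hx
    rcases List.mem_append.mp hx with h | h
    · have := (mem_idPerm.mp (hu.mem_iff.mp h)).2
      omega
    · simp at h; omega
  have hL : k + 1 ∉ u := by
    intro h
    have := (mem_idPerm.mp (hu.mem_iff.mp h)).2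
    omega
  have := revstackSort_decomp (R := ([] : List ℕ)) hL (by simp) hb
  simpa [revstackSort_nil] using this

private lemma iterate_revstackSort_concat {k : ℕ} (t : ℕ) :
    ∀ u : List ℕ, u.Perm (idPerm k) →
      revstackSort^[t] (u ++ [k + 1]) = revstackSort^[t] u ++ [k + 1] := by
  induction t with
  | zero => intro u _; rfl
  | succ t ih =>
    intro u hu
    rw [Function.iterate_succ_apply, Function.iterate_succ_apply,
      revstackSort_concat hu]
    exact ih (revstackSort u) ((revstackSort_perm u).trans hu)

end Aux3
section Aux4
open List

private def lowS (n : ℕ) : List ℕ := (List.range' 1 (n-1)).filter (fun k => k % 2 == n % 2)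
private def lowO (n : ℕ) : List ℕ := (List.range' 1 (n-1)).filter (fun k => !(k % 2 == n % 2))

private lemma range'_1_concat {m : ℕ} (hm : 1 ≤ m) :
    List.range' 1 m = List.range' 1 (m - 1) ++ [m] := by
  have h : m = (m - 1) + 1 := by omega
  conv_lhs => rw [h, List.range'_concat]
  have h2 : 1 + 1 * (m - 1) = m := by omega
  rw [h2]

private lemma parity_bool (x m : ℕ) : (x % 2 == (m + 1) % 2) = !(x % 2 == m % 2) := by
  have h1 : (m + 1) % 2 = 1 - m % 2 := by omega
  rcases Nat.mod_two_eq_zero_or_one x with hx | hx <;>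
    rcases Nat.mod_two_eq_zero_or_one m with hm | hm <;>
      rw [h1, hx, hm] <;> rfl

private lemma lowS_succ {m : ℕ} (hm : 1 ≤ m) : lowS (m + 1) = lowO m := by
  rw [lowS, lowO]
  have h1 : m + 1 - 1 = m := by omega
  rw [h1, range'_1_concat hm, List.filter_append]
  have h2 : (m % 2 == (m+1) % 2) = false := by
    simp only [beq_eq_false_iff_ne, ne_eq]
    omega
  rw [List.filter_cons, List.filter_nil, h2]
  simp only [Bool.false_eq_true, if_false, List.append_nil]
  exact List.filter_congr (fun x _ => parity_bool x m)

private lemma lowO_succ {m : ℕ} (hm : 1 ≤ m) : lowO (m + 1) = lowS m ++ [m] := by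
  rw [lowO, lowS]
  have h1 : m + 1 - 1 = m := by omega
  rw [h1, range'_1_concat hm, List.filter_append]
  have h2 : (!(m % 2 == (m+1) % 2)) = true := by
    simp only [Bool.not_eq_true', beq_eq_false_iff_ne, ne_eq]
    omega
  rw [List.filter_cons, List.filter_nil, h2]
  simp only [if_true]
  congr 1
  refine List.filter_congr (fun x _ => ?_)
  rw [parity_bool x m, Bool.not_not]

private lemma lowS_one : lowS 1 = [] := by rw [lowS]; rfl
private lemma lowO_one : lowO 1 = [] := by rw [lowO]; rfl
private lemma lowS_two : lowS 2 = [] := by rw [lowS]; rfl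
private lemma lowO_two : lowO 2 = [1] := by rw [lowO]; rfl

private lemma lowS_lowO_length {n : ℕ} (hn : 1 ≤ n) :
    (lowS n).length = (n - 1) / 2 ∧ (lowO n).length = n / 2 := by
  induction n, hn using Nat.le_induction with
  | base => simp [lowS_one, lowO_one]
  | succ m hm ih =>
    rw [lowS_succ hm, lowO_succ hm]
    simp only [List.length_append, List.length_singleton, ih.1, ih.2]
    omega

private lemma mem_lowS {n x : ℕ} : x ∈ lowS n ↔ (1 ≤ x ∧ x ≤ n - 1 ∧ x % 2 = n % 2) := by
  rw [lowS]
  simp only [List.mem_filter, List.mem_range'_1, beq_iff_eq]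
  omega

private lemma mem_lowO {n x : ℕ} : x ∈ lowO n ↔ (1 ≤ x ∧ x ≤ n - 1 ∧ x % 2 ≠ n % 2) := by
  rw [lowO]
  simp only [List.mem_filter, List.mem_range'_1, Bool.not_eq_true', beq_eq_false_iff_ne, ne_eq]
  omega

private lemma lowS_append_lowO_perm {n : ℕ} (hn : 1 ≤ n) :
    (lowS n ++ lowO n ++ [n]).Perm (idPerm n) := by
  have h1 : (lowS n ++ lowO n).Perm (List.range' 1 (n-1)) :=
    List.filter_append_perm _ _
  have h2 : idPerm n = List.range' 1 (n - 1) ++ [n] := by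
    rw [idPerm]; exact range'_1_concat hn
  rw [h2]
  exact h1.append (List.Perm.refl _)

private lemma nodup_lowS (n : ℕ) : (lowS n).Nodup :=
  (List.nodup_range' (s := 1) (n := n-1)).filter _

private lemma nodup_lowO (n : ℕ) : (lowO n).Nodup :=
  (List.nodup_range' (s := 1) (n := n-1)).filter _

end Aux4
section Aux5
open List

private lemma perm_concat_cons (a : ℕ) (l : List ℕ) : (l ++ [a]).Perm (a :: l) := by
  simpa using (List.perm_middle (a := a) (l₁ := l) (l₂ := ([] : List ℕ)))

private lemma append_cons_inj {m : ℕ} : ∀ {X A Y B : List ℕ}, m ∉ X → m ∉ A →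
    X ++ m :: Y = A ++ m :: B → X = A ∧ Y = B := by
  intro X
  induction X with
  | nil =>
    intro A Y B _ hA h
    cases A with
    | nil => simpa using h
    | cons a A' =>
      simp only [List.nil_append, List.cons_append, List.cons.injEq] at h
      exact absurd h.1.symm (fun hh => hA (hh ▸ List.mem_cons_self (a := a) (l := A')))
  | cons x X' ih =>
    intro A Y B hX hA h
    cases A with
    | nil =>
      simp only [List.cons_append, List.nil_append, List.cons.injEq] at h
      exact absurd h.1 (fun hh => hX (hh ▸ List.mem_cons_self (a := x) (l := X')))
    | cons a A' =>
      simp only [List.cons_append, List.cons.injEq] at h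
      have := ih (fun hh => hX (List.mem_cons_of_mem x hh))
        (fun hh => hA (List.mem_cons_of_mem a hh)) h.2
      exact ⟨by rw [h.1, this.1], this.2⟩

private lemma revstackSort_last {k : ℕ} {u : List ℕ} (hk : k ∈ u) (hb : ∀ x ∈ u, x ≤ k) :
    ∃ C, revstackSort u = C ++ [k] := by
  have hne : u.reverse ≠ [] := by
    intro h
    rw [List.reverse_eq_nil_iff] at h
    rw [h] at hk
    exact absurd hk (List.not_mem_nil)
  have hmax : u.reverse.max? = some k :=
    max?_eq_some_of (List.mem_reverse.mpr hk) (fun x hx => hb x (List.mem_reverse.mp hx))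
  rw [revstackSort, stackSort_ne_nil_eq u.reverse hne, hmax]
  exact ⟨_, rfl⟩

private lemma hard_step {m : ℕ} (hm : 2 ≤ m) {L R : List ℕ}
    (hw : (L ++ (m+1) :: R).Perm (idPerm (m+1))) :
    (∃ A B, revstackSort R ++ revstackSort L = A ++ m :: B ∧
        A.Perm (lowS m) ∧ B.Perm (lowO m))
    ↔ (L.Perm (lowS (m+1)) ∧ R.Perm (lowO (m+1))) := by
  have hm1 : 1 ≤ m := by omega
  have hnodup : (L ++ (m+1) :: R).Nodup := hw.nodup_iff.mpr (nodup_idPerm (m+1))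
  have hnL : L.Nodup := (List.nodup_append'.mp hnodup).1
  have hnR : R.Nodup := (List.nodup_cons.mp (List.nodup_append'.mp hnodup).2.1).2
  have hdisj : L.Disjoint ((m+1) :: R) := (List.nodup_append'.mp hnodup).2.2
  have hLR : (L ++ R).Perm (idPerm m) := by
    have h1 : (L ++ (m+1) :: R).Perm ((m+1) :: (L ++ R)) := List.perm_middle
    have h2 : (idPerm (m+1)).Perm ((m+1) :: idPerm m) := by
      rw [idPerm_succ]
      exact perm_concat_cons _ _
    exact ((h1.symm.trans hw).trans h2).cons_inv
  have hble : ∀ x ∈ L ++ R, 1 ≤ x ∧ x ≤ m := fun x hx => by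
    have := mem_idPerm.mp (hLR.mem_iff.mp hx)
    omega
  have hσperm : (revstackSort R ++ revstackSort L).Perm (idPerm m) :=
    (((revstackSort_perm R).append (revstackSort_perm L)).trans
      List.perm_append_comm).trans hLR
  have hσnodup : (revstackSort R ++ revstackSort L).Nodup :=
    hσperm.nodup_iff.mpr (nodup_idPerm m)
  constructor
  · rintro ⟨A, B, hsplit, hA, hB⟩
    have hmB : m ∉ B ∧ m ∉ A := by
      rw [hsplit] at hσnodup
      exact ⟨(List.nodup_cons.mp (List.nodup_append'.mp hσnodup).2.1).1,
        fun hh => (List.nodup_append'.mp hσnodup).2.2 hh (List.mem_cons_self (a := m) (l := B))⟩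
    have hBne : B ≠ [] := by
      intro h
      have : (m - 1) ∈ B := hB.mem_iff.mpr (mem_lowO.mpr ⟨by omega, by omega, by omega⟩)
      rw [h] at this
      exact absurd this List.not_mem_nil
    have hmLR : m ∈ L ++ R := hLR.mem_iff.mpr (mem_idPerm.mpr ⟨hm1, le_refl m⟩)
    have hmnotL : m ∉ L := by
      intro hmL
      obtain ⟨C, hC⟩ := revstackSort_last hmL
        (fun x hx => (hble x (List.mem_append_left R hx)).2)
      have hCnodup : (C ++ [m]).Nodup := by
        rw [← hC]
        exact ((revstackSort_perm L).nodup_iff).mpr hnL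
      have hmC : m ∉ C := fun hh =>
        (List.nodup_append'.mp hCnodup).2.2 hh (List.mem_cons_self (a := m) (l := []))
      have hmR : m ∉ R := fun hh => hdisj hmL (List.mem_cons_of_mem _ hh)
      have hmTR : m ∉ revstackSort R := fun hh => hmR ((revstackSort_perm R).mem_iff.mp hh)
      have heq : (revstackSort R ++ C) ++ m :: [] = A ++ m :: B := by
        rw [← hsplit, hC]
        simp [List.append_assoc]
      have := append_cons_inj (m := m)
        (by simp only [List.mem_append]; rintro (h | h); exacts [hmTR h, hmC h])
        hmB.2 heq
      exact hBne this.2.symm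
    have hmR : m ∈ R := by
      rcases List.mem_append.mp hmLR with h | h
      · exact absurd h hmnotL
      · exact h
    obtain ⟨R₁, R₂, hRsplit⟩ := List.append_of_mem hmR
    have hnR' : (R₁ ++ m :: R₂).Nodup := hRsplit ▸ hnR
    have hmR₁ : m ∉ R₁ := fun hh =>
      (List.nodup_append'.mp hnR').2.2 hh (List.mem_cons_self (a := m) (l := R₂))
    have hmR₂ : m ∉ R₂ := (List.nodup_cons.mp (List.nodup_append'.mp hnR').2.1).1
    have hbR : ∀ x ∈ R₁ ++ m :: R₂, x ≤ m := fun x hx =>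
      (hble x (List.mem_append_right L (by rw [hRsplit]; exact hx))).2
    have hTR : revstackSort R = revstackSort R₂ ++ revstackSort R₁ ++ [m] := by
      rw [hRsplit]; exact revstackSort_decomp hmR₁ hmR₂ hbR
    have heq : (revstackSort R₂ ++ revstackSort R₁) ++ m :: revstackSort L
        = A ++ m :: B := by
      rw [← hsplit, hTR]; simp [List.append_assoc]
    have hmX : m ∉ revstackSort R₂ ++ revstackSort R₁ := by
      simp only [List.mem_append]
      rintro (h | h)
      exacts [hmR₂ ((revstackSort_perm R₂).mem_iff.mp h),
        hmR₁ ((revstackSort_perm R₁).mem_iff.mp h)]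
    obtain ⟨hXA, hYB⟩ := append_cons_inj hmX hmB.2 heq
    constructor
    · rw [lowS_succ hm1]
      refine (revstackSort_perm L).symm.trans ?_
      rw [hYB]
      exact hB
    · rw [lowO_succ hm1, hRsplit]
      refine List.perm_middle.trans ?_
      refine (List.Perm.cons m ?_).trans (perm_concat_cons m (lowS m)).symm
      have h1 : (R₁ ++ R₂).Perm (revstackSort R₂ ++ revstackSort R₁) :=
        (List.perm_append_comm).trans
          ((revstackSort_perm R₂).symm.append (revstackSort_perm R₁).symm)
      refine h1.trans ?_
      rw [hXA]
      exact hA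
  · rintro ⟨hL, hR⟩
    rw [lowO_succ hm1] at hR
    have hmR : m ∈ R := hR.mem_iff.mpr (by simp)
    obtain ⟨R₁, R₂, hRsplit⟩ := List.append_of_mem hmR
    have hnR' : (R₁ ++ m :: R₂).Nodup := hRsplit ▸ hnR
    have hmR₁ : m ∉ R₁ := fun hh =>
      (List.nodup_append'.mp hnR').2.2 hh (List.mem_cons_self (a := m) (l := R₂))
    have hmR₂ : m ∉ R₂ := (List.nodup_cons.mp (List.nodup_append'.mp hnR').2.1).1
    have hbR : ∀ x ∈ R₁ ++ m :: R₂, x ≤ m := fun x hx =>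
      (hble x (List.mem_append_right L (by rw [hRsplit]; exact hx))).2
    have hTR : revstackSort R = revstackSort R₂ ++ revstackSort R₁ ++ [m] := by
      rw [hRsplit]; exact revstackSort_decomp hmR₁ hmR₂ hbR
    refine ⟨revstackSort R₂ ++ revstackSort R₁, revstackSort L, ?_, ?_, ?_⟩
    · rw [hTR]; simp [List.append_assoc]
    · have h1 : (revstackSort R₂ ++ revstackSort R₁).Perm (R₁ ++ R₂) :=
        ((revstackSort_perm R₂).append (revstackSort_perm R₁)).trans
          List.perm_append_comm
      have h2 : (m :: (R₁ ++ R₂)).Perm (m :: lowS m) := by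
        refine List.perm_middle.symm.trans ?_
        rw [← hRsplit]
        exact hR.trans (perm_concat_cons m (lowS m))
      exact h1.trans h2.cons_inv
    · refine (revstackSort_perm L).trans ?_
      rw [lowS_succ hm1] at hL
      exact hL
end Aux5
section Aux6
open List

private lemma sortable_iff : ∀ m : ℕ, 2 ≤ m → ∀ w : List ℕ, w.Perm (idPerm m) →
    (revstackSort^[m-2] w = idPerm m ↔
      ¬ ∃ L R, w = L ++ m :: R ∧ L.Perm (lowS m) ∧ R.Perm (lowO m)) := by
  intro m hm
  induction m, hm using Nat.le_induction with
  | base =>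
    intro w hw
    have hid : idPerm 2 = [1, 2] := rfl
    rw [hid] at hw
    have hwmem : w = [1, 2] ∨ w = [2, 1] := by
      rcases w with _ | ⟨a, w⟩
      · simpa using hw.length_eq
      rcases w with _ | ⟨b, w⟩
      · simpa using hw.length_eq
      rcases w with _ | ⟨c, w⟩
      swap
      · simpa using hw.length_eq
      rcases (by simpa using hw.mem_iff.mp (List.mem_cons_self (a := a) (l := [b])) :
          a = 1 ∨ a = 2) with h | h <;> subst h
      · left
        have hb := List.perm_singleton.mp hw.cons_inv
        rw [hb]
      · right
        have h2 : ([2, b] : List ℕ).Perm [2, 1] :=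
          hw.trans (List.Perm.swap 2 1 [])
        have hb := List.perm_singleton.mp h2.cons_inv
        rw [hb]
    have h0 : (2:ℕ) - 2 = 0 := rfl
    rw [h0]
    simp only [Function.iterate_zero, id_eq]
    rcases hwmem with hw2 | hw2 <;> subst hw2
    · simp only [hid, true_iff]
      rintro ⟨L, R, hEq, hLp, hRp⟩
      have hL0 : L.length = 0 := by
        have := hLp.length_eq
        rw [lowS_two] at this
        simpa using this
      rw [List.length_eq_zero_iff] at hL0
      subst hL0
      simp at hEq
    · constructor
      · intro h
        rw [hid] at h
        simp at h
      · intro h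
        exact absurd ⟨[], [1], rfl, by rw [lowS_two], by rw [lowO_two]⟩ h
  | succ m hm ih =>
    intro w hw
    have hmem : m + 1 ∈ w := hw.mem_iff.mpr (mem_idPerm.mpr ⟨by omega, le_refl _⟩)
    obtain ⟨L, R, hsplit⟩ := List.append_of_mem hmem
    have hw' : (L ++ (m+1) :: R).Perm (idPerm (m+1)) := hsplit ▸ hw
    have hnodup : (L ++ (m+1) :: R).Nodup := hw'.nodup_iff.mpr (nodup_idPerm (m+1))
    have hmL : m + 1 ∉ L := fun hh =>
      (List.nodup_append'.mp hnodup).2.2 hh (List.mem_cons_self (a := _) (l := R))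
    have hmR : m + 1 ∉ R := (List.nodup_cons.mp (List.nodup_append'.mp hnodup).2.1).1
    have hb : ∀ x ∈ L ++ (m+1) :: R, x ≤ m + 1 := fun x hx =>
      (mem_idPerm.mp (hw'.mem_iff.mp hx)).2
    have hLR : (L ++ R).Perm (idPerm m) := by
      have h1 : (L ++ (m+1) :: R).Perm ((m+1) :: (L ++ R)) := List.perm_middle
      have h2 : (idPerm (m+1)).Perm ((m+1) :: idPerm m) := by
        rw [idPerm_succ]; exact perm_concat_cons _ _
      exact ((h1.symm.trans hw').trans h2).cons_inv
    have hσ : (revstackSort R ++ revstackSort L).Perm (idPerm m) :=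
      (((revstackSort_perm R).append (revstackSort_perm L)).trans
        List.perm_append_comm).trans hLR
    have he : m + 1 - 2 = (m - 2) + 1 := by omega
    have hiter : revstackSort^[m+1-2] w =
        revstackSort^[m-2] (revstackSort R ++ revstackSort L) ++ [m + 1] := by
      rw [he, Function.iterate_succ_apply, hsplit,
        revstackSort_decomp hmL hmR hb, iterate_revstackSort_concat (m - 2) _ hσ]
    rw [hiter, idPerm_succ]
    have hcancel : (revstackSort^[m-2] (revstackSort R ++ revstackSort L) ++ [m + 1]
        = idPerm m ++ [m + 1]) ↔
        revstackSort^[m-2] (revstackSort R ++ revstackSort L) = idPerm m := by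
      constructor
      · exact fun h => List.append_cancel_right h
      · intro h; rw [h]
    rw [hcancel, ih _ hσ, not_iff_not, hard_step hm hw']
    constructor
    · rintro ⟨hLp, hRp⟩
      exact ⟨L, R, hsplit, hLp, hRp⟩
    · rintro ⟨L', R', hEq, hLp, hRp⟩
      have hmL' : m + 1 ∉ L' := fun hh => by
        have := mem_lowS.mp (hLp.mem_iff.mp hh)
        omega
      have := append_cons_inj hmL hmL' (hsplit.symm.trans hEq)
      rw [this.1, this.2]
      exact ⟨hLp, hRp⟩

end Aux6
section Aux7
open List

private lemma mem_permsOf {n : ℕ} {w : List ℕ} : w ∈ permsOf n ↔ w.Perm (idPerm n) := by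
  rw [permsOf, List.mem_toFinset, List.mem_permutations]

private lemma card_permsOf (n : ℕ) : (permsOf n).card = n.factorial := by
  rw [permsOf, List.toFinset_card_of_nodup (List.nodup_permutations _ (nodup_idPerm n)),
    List.length_permutations]
  congr 1
  rw [idPerm, List.length_range']

private def hardF (n : ℕ) : Finset (List ℕ) :=
  ((lowS n).permutations.toFinset ×ˢ (lowO n).permutations.toFinset).image
    (fun p => p.1 ++ n :: p.2)

private lemma mem_hardF {n : ℕ} {w : List ℕ} :
    w ∈ hardF n ↔ ∃ L R, w = L ++ n :: R ∧ L.Perm (lowS n) ∧ R.Perm (lowO n) := by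
  rw [hardF, Finset.mem_image]
  constructor
  · rintro ⟨⟨L, R⟩, hp, hEq⟩
    rw [Finset.mem_product, List.mem_toFinset, List.mem_toFinset,
      List.mem_permutations, List.mem_permutations] at hp
    exact ⟨L, R, hEq.symm, hp.1, hp.2⟩
  · rintro ⟨L, R, hEq, hLp, hRp⟩
    refine ⟨(L, R), ?_, hEq.symm⟩
    rw [Finset.mem_product, List.mem_toFinset, List.mem_toFinset,
      List.mem_permutations, List.mem_permutations]
    exact ⟨hLp, hRp⟩

private lemma hardF_subset {n : ℕ} (hn : 1 ≤ n) : hardF n ⊆ permsOf n := by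
  intro w hw
  obtain ⟨L, R, hEq, hLp, hRp⟩ := mem_hardF.mp hw
  rw [mem_permsOf, hEq]
  calc (L ++ n :: R) ~ n :: (L ++ R) := List.perm_middle
    _ ~ n :: (lowS n ++ lowO n) := (hLp.append hRp).cons n
    _ ~ (lowS n ++ lowO n) ++ [n] := (perm_concat_cons n _).symm
    _ ~ idPerm n := lowS_append_lowO_perm hn

private lemma card_hardF {n : ℕ} (hn : 1 ≤ n) :
    (hardF n).card = ((n-1)/2).factorial * (n/2).factorial := by
  rw [hardF]
  rw [Finset.card_image_of_injOn]
  · rw [Finset.card_product,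
      List.toFinset_card_of_nodup (List.nodup_permutations _ (nodup_lowS n)),
      List.toFinset_card_of_nodup (List.nodup_permutations _ (nodup_lowO n)),
      List.length_permutations, List.length_permutations,
      (lowS_lowO_length hn).1, (lowS_lowO_length hn).2]
  · rintro ⟨L₁, R₁⟩ hp₁ ⟨L₂, R₂⟩ hp₂ hEq
    simp only [Finset.coe_product, Set.mem_prod, Finset.mem_coe, List.mem_toFinset,
      List.mem_permutations] at hp₁ hp₂
    have hnL₁ : n ∉ L₁ := fun hh => by
      have := mem_lowS.mp (hp₁.1.mem_iff.mp hh); omega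
    have hnL₂ : n ∉ L₂ := fun hh => by
      have := mem_lowS.mp (hp₂.1.mem_iff.mp hh); omega
    have := append_cons_inj hnL₁ hnL₂ hEq
    exact Prod.ext this.1 this.2

end Aux7
theorem card_revstack_n_sub_two
    (n : ℕ) (hn : 4 ≤ n) :
    (revstackSortable n (n - 2)).card =
      n.factorial - ((n - 1) / 2).factorial * ((n - 1 + 1) / 2).factorial := by
  have hn1 : 1 ≤ n := by omega
  have hn2 : 2 ≤ n := by omega
  have hset : revstackSortable n (n - 2) = permsOf n \ hardF n := by
    ext w
    rw [revstackSortable, Finset.mem_filter, Finset.mem_sdiff]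
    constructor
    · rintro ⟨hmem, hsort⟩
      refine ⟨hmem, fun hh => ?_⟩
      exact (sortable_iff n hn2 w (mem_permsOf.mp hmem)).mp hsort (mem_hardF.mp hh)
    · rintro ⟨hmem, hnot⟩
      refine ⟨hmem, ?_⟩
      exact (sortable_iff n hn2 w (mem_permsOf.mp hmem)).mpr
        (fun hh => hnot (mem_hardF.mpr hh))
  have harith : n - 1 + 1 = n := by omega
  rw [hset, Finset.card_sdiff_of_subset (hardF_subset hn1), card_permsOf, card_hardF hn1, harith]
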